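/- (Lovász Local Lemma, symmetric lopsided version) Let A = {A_1, A_2, …, A_n} be a family of events in a probability space. Suppose that for every i ∈ {1,…,n} there is a set Γ(A_i) ⊆ A of size at most D such that for each subfamily B ⊆ A \ (Γ(A_i) ∪ {A_i}) with P(∩_{B∈B} B̄) > 0 one has P(A_i | ∩_{B∈B} B̄) ≤ 1/(e(D+1)). Then P(∩_{i=1}^n Ā_i) > 0. -/

import Mathlib

open MeasureTheory ProbabilityTheory

/-- Symmetric lopsided Lovász Local Lemma: if for every event `A_i` there is a set
`Γ(A_i)` of at most `D` of the events such that for every subfamily `B` of events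
avoiding `Γ(A_i) ∪ {A_i}` (whose intersection of complements has positive probability)
one has `P(A_i | ⋂_{B ∈ B} B̄) ≤ 1/(e(D+1))`, then `P(⋂ Ā_i) > 0`. -/
theorem lovasz_local_lemma_lopsided
    {Ω : Type*} [MeasureSpace Ω] [IsProbabilityMeasure (ℙ : Measure Ω)]
    {n : ℕ} (A : Fin n → Set Ω) (hA : ∀ i, MeasurableSet (A i))
    (D : ℕ) (Γ : Fin n → Finset (Fin n)) (hΓ : ∀ i, (Γ i).card ≤ D)
    (hcond : ∀ i : Fin n, ∀ B : Finset (Fin n),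
      (∀ j ∈ B, j ∉ Γ i ∧ j ≠ i) →
      ℙ (⋂ j ∈ B, (A j)ᶜ) ≠ 0 →
      ℙ[|⋂ j ∈ B, (A j)ᶜ] (A i) ≤ ENNReal.ofReal (1 / (Real.exp 1 * (D + 1)))) :
    0 < ℙ (⋂ i, (A i)ᶜ) := by
  classical
  set d : ℝ := (D : ℝ) with hd
  have hd0 : (0:ℝ) ≤ d := Nat.cast_nonneg D
  set p : ENNReal := ENNReal.ofReal (1 / (Real.exp 1 * (D + 1))) with hp
  set x : ENNReal := ENNReal.ofReal (1 / (d + 2)) with hx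
  set y : ENNReal := ENNReal.ofReal ((d + 1) / (d + 2)) with hy
  -- basic numeric facts
  have hd2 : (0:ℝ) < d + 2 := by linarith
  have hd1 : (0:ℝ) < d + 1 := by linarith
  have hxy : x + y = 1 := by
    rw [hx, hy, ← ENNReal.ofReal_add (by positivity) (by positivity)]
    rw [show 1 / (d + 2) + (d + 1) / (d + 2) = 1 by field_simp; ring]
    exact ENNReal.ofReal_one
  have hy1 : y ≤ 1 := by
    rw [hy]
    refine ENNReal.ofReal_le_one.mpr ?_
    rw [div_le_one hd2]; linarith
  have hy0 : y ≠ 0 := by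
    rw [hy]
    simp only [ne_eq, ENNReal.ofReal_eq_zero, not_le]
    positivity
  -- the key analytic inequality : p ≤ x * y ^ D
  have hreal : 1 / (Real.exp 1 * (d + 1)) ≤ (1 / (d + 2)) * ((d + 1) / (d + 2)) ^ D := by
    have h1 : 1 / (d + 1) + 1 ≤ Real.exp (1 / (d + 1)) := Real.add_one_le_exp _
    have hbase : (d + 2) / (d + 1) = 1 / (d + 1) + 1 := by field_simp; ring
    have h2 : ((d + 2) / (d + 1)) ^ (D + 1) ≤ Real.exp 1 := by
      calc ((d + 2) / (d + 1)) ^ (D + 1) ≤ Real.exp (1 / (d + 1)) ^ (D + 1) := by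
            apply pow_le_pow_left₀ (by positivity)
            rw [hbase]; exact h1
        _ = Real.exp ((D + 1 : ℕ) * (1 / (d + 1))) := by rw [Real.exp_nat_mul]
        _ = Real.exp 1 := by
            congr 1
            push_cast
            field_simp
            rfl
    have hXpos : (0:ℝ) < ((d + 2) / (d + 1)) ^ (D + 1) := by positivity
    have h3 : 1 ≤ Real.exp 1 * (((d + 1) / (d + 2)) ^ (D + 1)) := by
      have : ((d + 1) / (d + 2)) ^ (D + 1) = (((d + 2) / (d + 1)) ^ (D + 1))⁻¹ := by
        rw [← inv_pow, inv_div]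
      rw [this, le_mul_inv_iff₀ hXpos, one_mul]
      exact h2
    rw [div_le_iff₀ (by positivity)]
    have heq : (1 / (d + 2)) * ((d + 1) / (d + 2)) ^ D * (Real.exp 1 * (d + 1)) =
        Real.exp 1 * (((d + 1) / (d + 2)) ^ D * ((d + 1) / (d + 2))) := by
      field_simp
    rw [heq, ← pow_succ]
    exact h3
  have hpxy : p ≤ x * y ^ D := by
    rw [hp, hx, hy, ← ENNReal.ofReal_pow (by positivity), ← ENNReal.ofReal_mul (by positivity)]
    refine ENNReal.ofReal_le_ofReal ?_
    have : ((D:ℝ) + 1) = d + 1 := by rw [hd]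
    rw [this]
    exact hreal
  have hpx : p ≤ x := by
    refine hpxy.trans ?_
    calc x * y ^ D ≤ x * 1 := by
          exact mul_le_mul_right (pow_le_one' hy1 D) x
      _ = x := mul_one x
  -- measurability of the basic intersections
  have hM : ∀ S : Finset (Fin n), MeasurableSet (⋂ j ∈ S, (A j)ᶜ) := by
    intro S
    exact MeasurableSet.biInter (S : Set (Fin n)).to_countable fun j _ => (hA j).compl
  -- conditional probability bound in product form
  have hstep0 : ∀ (i : Fin n) (B : Finset (Fin n)),
      (∀ j ∈ B, j ∉ Γ i ∧ j ≠ i) → ℙ (⋂ j ∈ B, (A j)ᶜ) ≠ 0 →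
      ℙ (A i ∩ ⋂ j ∈ B, (A j)ᶜ) ≤ p * ℙ (⋂ j ∈ B, (A j)ᶜ) := by
    intro i B hB hB0
    have hc := hcond i B hB hB0
    rw [cond_apply (hM B) ℙ (A i)] at hc
    calc ℙ (A i ∩ ⋂ j ∈ B, (A j)ᶜ) = ℙ ((⋂ j ∈ B, (A j)ᶜ) ∩ A i) := by rw [Set.inter_comm]
      _ = ℙ (⋂ j ∈ B, (A j)ᶜ) * ((ℙ (⋂ j ∈ B, (A j)ᶜ))⁻¹ * ℙ ((⋂ j ∈ B, (A j)ᶜ) ∩ A i)) := by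
          rw [← mul_assoc, ENNReal.mul_inv_cancel hB0 (measure_ne_top _ _), one_mul]
      _ ≤ ℙ (⋂ j ∈ B, (A j)ᶜ) * p := mul_le_mul_right hc _
      _ = p * ℙ (⋂ j ∈ B, (A j)ᶜ) := mul_comm _ _
  -- the main induction
  have key : ∀ N : ℕ, ∀ S : Finset (Fin n), S.card ≤ N →
      0 < ℙ (⋂ j ∈ S, (A j)ᶜ) ∧
      ∀ i, i ∉ S → ℙ (A i ∩ ⋂ j ∈ S, (A j)ᶜ) ≤ x * ℙ (⋂ j ∈ S, (A j)ᶜ) := by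
    intro N
    induction N with
    | zero =>
      intro S hS
      have hSe : S = ∅ := Finset.card_eq_zero.mp (Nat.le_zero.mp hS)
      subst hSe
      have huniv : (⋂ j ∈ (∅ : Finset (Fin n)), (A j)ᶜ) = Set.univ := by simp
      constructor
      · rw [huniv, measure_univ]; exact zero_lt_one
      · intro i _
        have h0 : ℙ (⋂ j ∈ (∅ : Finset (Fin n)), (A j)ᶜ) ≠ 0 := by
          rw [huniv, measure_univ]; exact one_ne_zero
        calc ℙ (A i ∩ ⋂ j ∈ (∅ : Finset (Fin n)), (A j)ᶜ)
            ≤ p * ℙ (⋂ j ∈ (∅ : Finset (Fin n)), (A j)ᶜ) :=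
              hstep0 i ∅ (by simp) h0
          _ ≤ x * ℙ (⋂ j ∈ (∅ : Finset (Fin n)), (A j)ᶜ) := mul_le_mul_left hpx _
    | succ N IH =>
      -- the one-event peeling step, valid for sets of card ≤ N
      have hstep : ∀ (k : Fin n) (T : Finset (Fin n)), k ∉ T → T.card ≤ N →
          y * ℙ (⋂ j ∈ T, (A j)ᶜ) ≤ ℙ (⋂ j ∈ insert k T, (A j)ᶜ) := by
        intro k T hk hT
        have hins : (⋂ j ∈ insert k T, (A j)ᶜ) = (⋂ j ∈ T, (A j)ᶜ) \ A k := by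
          rw [Finset.set_biInter_insert, Set.inter_comm, Set.diff_eq]
        have h1 : ℙ ((⋂ j ∈ T, (A j)ᶜ) ∩ A k) + ℙ ((⋂ j ∈ T, (A j)ᶜ) \ A k)
            = ℙ (⋂ j ∈ T, (A j)ᶜ) := measure_inter_add_diff _ (hA k)
        have h2 : ℙ ((⋂ j ∈ T, (A j)ᶜ) ∩ A k) ≤ x * ℙ (⋂ j ∈ T, (A j)ᶜ) := by
          rw [Set.inter_comm]
          exact (IH T hT).2 k hk
        rw [hins]
        rw [← ENNReal.add_le_add_iff_right (measure_ne_top ℙ ((⋂ j ∈ T, (A j)ᶜ) ∩ A k))]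
        calc y * ℙ (⋂ j ∈ T, (A j)ᶜ) + ℙ ((⋂ j ∈ T, (A j)ᶜ) ∩ A k)
            ≤ y * ℙ (⋂ j ∈ T, (A j)ᶜ) + x * ℙ (⋂ j ∈ T, (A j)ᶜ) := add_le_add_right h2 _
          _ = (x + y) * ℙ (⋂ j ∈ T, (A j)ᶜ) := by ring
          _ = ℙ (⋂ j ∈ T, (A j)ᶜ) := by rw [hxy, one_mul]
          _ = ℙ ((⋂ j ∈ T, (A j)ᶜ) ∩ A k) + ℙ ((⋂ j ∈ T, (A j)ᶜ) \ A k) := h1.symm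
          _ = ℙ ((⋂ j ∈ T, (A j)ᶜ) \ A k) + ℙ ((⋂ j ∈ T, (A j)ᶜ) ∩ A k) := add_comm _ _
      intro S hS
      -- positivity for all T of card ≤ N+1
      have hpos : ∀ T : Finset (Fin n), T.card ≤ N + 1 → 0 < ℙ (⋂ j ∈ T, (A j)ᶜ) := by
        intro T hT
        rcases le_or_gt T.card N with h | h
        · exact (IH T h).1
        · have hTc : T.card = N + 1 := le_antisymm hT h
          have hTne : T.Nonempty := Finset.card_pos.mp (by omega)
          obtain ⟨k, hk⟩ := hTne
          have hk' : k ∉ T.erase k := Finset.notMem_erase k T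
          have hcard : (T.erase k).card ≤ N := by
            rw [Finset.card_erase_of_mem hk, hTc]
            omega
          have hT' : T = insert k (T.erase k) := (Finset.insert_erase hk).symm
          have hposT' : 0 < ℙ (⋂ j ∈ T.erase k, (A j)ᶜ) := (IH _ hcard).1
          have := hstep k (T.erase k) hk' hcard
          rw [← hT'] at this
          refine lt_of_lt_of_le ?_ this
          exact ENNReal.mul_pos hy0 (ne_of_gt hposT')
      refine ⟨hpos S hS, ?_⟩
      intro i hi
      set S₁ : Finset (Fin n) := S.filter (· ∈ Γ i) with hS₁
      set S₂ : Finset (Fin n) := S.filter (· ∉ Γ i) with hS₂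
      have hS1S2 : S₁ ∪ S₂ = S := Finset.filter_union_filter_not_eq _ S
      have hS1sub : S₁ ⊆ Γ i := fun j hj => (Finset.mem_filter.mp hj).2
      have hS1card : S₁.card ≤ D := le_trans (Finset.card_le_card hS1sub) (hΓ i)
      have hS2sub : S₂ ⊆ S := Finset.filter_subset _ S
      have hS2cond : ∀ j ∈ S₂, j ∉ Γ i ∧ j ≠ i := by
        intro j hj
        refine ⟨(Finset.mem_filter.mp hj).2, ?_⟩
        rintro rfl
        exact hi (hS2sub hj)
      have hS2pos : ℙ (⋂ j ∈ S₂, (A j)ᶜ) ≠ 0 :=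
        ne_of_gt (hpos S₂ (le_trans (Finset.card_le_card hS2sub) hS))
      -- peeling the S₁ events one by one
      have peel : ∀ U : Finset (Fin n), U ⊆ S₁ →
          y ^ U.card * ℙ (⋂ j ∈ S₂, (A j)ᶜ) ≤ ℙ (⋂ j ∈ U ∪ S₂, (A j)ᶜ) := by
        intro U
        induction U using Finset.induction_on with
        | empty => intro _; simp
        | @insert a U ha IHU =>
          intro hsub
          have hUsub : U ⊆ S₁ := fun j hj => hsub (Finset.mem_insert_of_mem hj)
          have haS1 : a ∈ S₁ := hsub (Finset.mem_insert_self a U)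
          have haS2 : a ∉ S₂ := by
            intro h
            exact (Finset.mem_filter.mp h).2 (hS1sub haS1)
          have haUS2 : a ∉ U ∪ S₂ := by
            rw [Finset.mem_union]; push_neg; exact ⟨ha, haS2⟩
          have hsubS : insert a (U ∪ S₂) ⊆ S := by
            intro j hj
            rcases Finset.mem_insert.mp hj with rfl | hj
            · exact hS1sub.trans (fun _ h => h) haS1 |> fun _ => (Finset.filter_subset _ S) haS1
            · rcases Finset.mem_union.mp hj with h | h
              · exact (Finset.filter_subset _ S) (hUsub h)
              · exact hS2sub h
          have hcardUS2 : (U ∪ S₂).card ≤ N := by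
            have h1 : (insert a (U ∪ S₂)).card ≤ S.card := Finset.card_le_card hsubS
            rw [Finset.card_insert_of_notMem haUS2] at h1
            omega
          have hstepa := hstep a (U ∪ S₂) haUS2 hcardUS2
          have hinsU : insert a U ∪ S₂ = insert a (U ∪ S₂) := Finset.insert_union a U S₂
          rw [hinsU, Finset.card_insert_of_notMem ha, pow_succ]
          calc y ^ U.card * y * ℙ (⋂ j ∈ S₂, (A j)ᶜ)
              = y * (y ^ U.card * ℙ (⋂ j ∈ S₂, (A j)ᶜ)) := by ring
            _ ≤ y * ℙ (⋂ j ∈ U ∪ S₂, (A j)ᶜ) := mul_le_mul_right (IHU hUsub) y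
            _ ≤ ℙ (⋂ j ∈ insert a (U ∪ S₂), (A j)ᶜ) := hstepa
      have hpeel := peel S₁ (Finset.Subset.refl S₁)
      rw [hS1S2] at hpeel
      have hmono : (⋂ j ∈ S, (A j)ᶜ) ⊆ ⋂ j ∈ S₂, (A j)ᶜ := by
        intro z hz
        simp only [Set.mem_iInter] at hz ⊢
        exact fun j hj => hz j (hS2sub hj)
      have hyD : y ^ D ≤ y ^ S₁.card := pow_le_pow_right_of_le_one' hy1 hS1card
      calc ℙ (A i ∩ ⋂ j ∈ S, (A j)ᶜ)
          ≤ ℙ (A i ∩ ⋂ j ∈ S₂, (A j)ᶜ) :=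
            measure_mono (Set.inter_subset_inter_right _ hmono)
        _ ≤ p * ℙ (⋂ j ∈ S₂, (A j)ᶜ) := hstep0 i S₂ hS2cond hS2pos
        _ ≤ (x * y ^ S₁.card) * ℙ (⋂ j ∈ S₂, (A j)ᶜ) := by
            refine mul_le_mul_left (hpxy.trans ?_) _
            exact mul_le_mul_right hyD x
        _ = x * (y ^ S₁.card * ℙ (⋂ j ∈ S₂, (A j)ᶜ)) := by ring
        _ ≤ x * ℙ (⋂ j ∈ S, (A j)ᶜ) := mul_le_mul_right hpeel x
  have hfin := (key n Finset.univ (by simp)).1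
  have : (⋂ i, (A i)ᶜ) = ⋂ j ∈ (Finset.univ : Finset (Fin n)), (A j)ᶜ := by simp
  rw [this]
  exact hfin
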